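/- arXiv:1510.04356 — 4 statements merged into one kernel-verified Lean document; each statement's English description precedes it below -/
import Mathlib

section
/- Let n, N, N_G be positive integers, let M be a real n × (N·N_G) matrix whose columns are indexed by pairs (i,g) ∈ {1,…,N}×{1,…,N_G}, let y ∈ ℝⁿ, and let T ⊆ {1,…,N}. Suppose there exists c ∈ ℝ^{N·N_G} with M c = y whose row-support S = { i : the i-th row of reshape(c) is nonzero } satisfies S ⊆ T, and there exists a dual certificate λ ∈ ℝⁿ such that: (i) for every i ∈ S, the i-th row of reshape(Mᵀλ) equals C_{i}/‖C_{i}‖₂, where C = reshape(c) and C_{i} is its i-th row; (ii) for every i ∈ T \ S, the ℓ₂ norm of the i-th row of reshape(Mᵀλ) is at most 1; and (iii) for every i ∉ T, the ℓ₂ norm of the i-th row of reshape(Mᵀλ) is strictly less than 1. Then every z ∈ ℝ^{N·N_G} that minimizes ‖reshape(z)‖_{1,2} subject to M z = y satisfies: the i-th row of reshape(z) is zero for every i ∉ T. -/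
open Matrix

/-- The ℓ₂ norm of the `i`-th row of `reshape c`, where `c : ℝ^{N·N_G}` is indexed by
pairs `(i, g)` and `reshape c` is the `N × N_G` matrix with `(i,g)` entry `c (i,g)`. -/
noncomputable def rowNorm2 {N NG : ℕ} (c : Fin N × Fin NG → ℝ) (i : Fin N) : ℝ :=
  Real.sqrt (∑ g, (c (i, g)) ^ 2)

/-- The group-sparse norm `‖reshape c‖_{1,2}`: the sum of the ℓ₂ norms of the rows. -/
noncomputable def norm12 {N NG : ℕ} (c : Fin N × Fin NG → ℝ) : ℝ :=
  ∑ i, rowNorm2 c i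

/-- Cauchy–Schwarz for finite sums in sqrt form. -/
lemma cs_sqrt {ι : Type*} [Fintype ι] (f g : ι → ℝ) :
    ∑ i, f i * g i ≤ Real.sqrt (∑ i, f i ^ 2) * Real.sqrt (∑ i, g i ^ 2) := by
  have h := Finset.sum_mul_sq_le_sq_mul_sq Finset.univ f g
  calc ∑ i, f i * g i ≤ |∑ i, f i * g i| := le_abs_self _
    _ = Real.sqrt ((∑ i, f i * g i) ^ 2) := (Real.sqrt_sq_eq_abs _).symm
    _ ≤ Real.sqrt ((∑ i, f i ^ 2) * ∑ i, g i ^ 2) := Real.sqrt_le_sqrt h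
    _ = _ := Real.sqrt_mul (by positivity) _

theorem stmt0 {n N NG : ℕ} (hn : 0 < n) (hN : 0 < N) (hNG : 0 < NG)
    (M : Matrix (Fin n) (Fin N × Fin NG) ℝ) (y : Fin n → ℝ) (T : Set (Fin N))
    -- a feasible `c` whose row-support `S = {i | row i of reshape c ≠ 0}` is contained in `T`
    (c : Fin N × Fin NG → ℝ) (hc : M *ᵥ c = y)
    (hST : ∀ i : Fin N, (∃ g, c (i, g) ≠ 0) → i ∈ T)
    -- a dual certificate `λ`
    (lam : Fin n → ℝ)
    -- (i) on the row-support `S`, the rows of `reshape (Mᵀ λ)` equal the normalized rows of `reshape c`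
    (h1 : ∀ i : Fin N, (∃ g, c (i, g) ≠ 0) →
      ∀ g, (Mᵀ *ᵥ lam) (i, g) = c (i, g) / rowNorm2 c i)
    -- (ii) on `T \ S`, the rows of `reshape (Mᵀ λ)` have ℓ₂ norm at most 1
    (h2 : ∀ i ∈ T, (∀ g, c (i, g) = 0) → rowNorm2 (Mᵀ *ᵥ lam) i ≤ 1)
    -- (iii) outside `T`, the rows of `reshape (Mᵀ λ)` have ℓ₂ norm strictly less than 1
    (h3 : ∀ i ∉ T, rowNorm2 (Mᵀ *ᵥ lam) i < 1)
    -- `z` is any minimizer of `‖reshape ·‖_{1,2}` subject to `M z = y`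
    (z : Fin N × Fin NG → ℝ) (hz : M *ᵥ z = y)
    (hopt : ∀ w : Fin N × Fin NG → ℝ, M *ᵥ w = y → norm12 z ≤ norm12 w) :
    ∀ i ∉ T, ∀ g, z (i, g) = 0 := by
  set d : Fin N × Fin NG → ℝ := Mᵀ *ᵥ lam with hd
  -- dot product identity
  have dot : ∀ w : Fin N × Fin NG → ℝ, (∑ p, d p * w p) = lam ⬝ᵥ (M *ᵥ w) := by
    intro w
    rw [dotProduct_mulVec]
    simp [hd, Matrix.mulVec_transpose, dotProduct]
  -- ⟨d, c⟩ = norm12 c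
  have hdc : (∑ p, d p * c p) = norm12 c := by
    rw [Fintype.sum_prod_type, norm12]
    refine Finset.sum_congr rfl fun i _ => ?_
    by_cases hS : ∃ g, c (i, g) ≠ 0
    · have hrpos : 0 < rowNorm2 c i := by
        obtain ⟨g0, hg0⟩ := hS
        have : 0 < ∑ g, (c (i, g)) ^ 2 :=
          Finset.sum_pos' (fun g _ => sq_nonneg _)
            ⟨g0, Finset.mem_univ _, by positivity⟩
        exact Real.sqrt_pos.mpr this
      have hsq : rowNorm2 c i ^ 2 = ∑ g, (c (i, g)) ^ 2 :=
        Real.sq_sqrt (Finset.sum_nonneg fun g _ => sq_nonneg _)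
      calc ∑ g, d (i, g) * c (i, g)
          = ∑ g, (c (i, g)) ^ 2 / rowNorm2 c i := by
            refine Finset.sum_congr rfl fun g _ => ?_
            rw [h1 i hS g]; ring
        _ = (∑ g, (c (i, g)) ^ 2) / rowNorm2 c i := by rw [Finset.sum_div]
        _ = rowNorm2 c i := by
            rw [← hsq, sq, mul_div_assoc, div_self hrpos.ne', mul_one]
    · push_neg at hS
      simp [hS, rowNorm2]
  -- per-row Cauchy–Schwarz
  have hcsz : (∑ p, d p * z p) ≤ ∑ i, rowNorm2 d i * rowNorm2 z i := by
    rw [Fintype.sum_prod_type]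
    exact Finset.sum_le_sum fun i _ => cs_sqrt (fun g => d (i, g)) (fun g => z (i, g))
  -- row norms of the dual are ≤ 1
  have halpha : ∀ i, rowNorm2 d i ≤ 1 := by
    intro i
    by_cases hT : i ∈ T
    · by_cases hS : ∃ g, c (i, g) ≠ 0
      · have hrpos : 0 < rowNorm2 c i := by
          obtain ⟨g0, hg0⟩ := hS
          have : 0 < ∑ g, (c (i, g)) ^ 2 :=
            Finset.sum_pos' (fun g _ => sq_nonneg _)
              ⟨g0, Finset.mem_univ _, by positivity⟩
          exact Real.sqrt_pos.mpr this
        have hsq : rowNorm2 c i ^ 2 = ∑ g, (c (i, g)) ^ 2 :=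
          Real.sq_sqrt (Finset.sum_nonneg fun g _ => sq_nonneg _)
        have : rowNorm2 d i = 1 := by
          unfold rowNorm2
          have : ∑ g, (d (i, g)) ^ 2 = 1 := by
            calc ∑ g, (d (i, g)) ^ 2
                = ∑ g, (c (i, g)) ^ 2 / rowNorm2 c i ^ 2 := by
                  refine Finset.sum_congr rfl fun g _ => ?_
                  rw [h1 i hS g]; rw [div_pow]
              _ = (∑ g, (c (i, g)) ^ 2) / rowNorm2 c i ^ 2 := by rw [Finset.sum_div]
              _ = 1 := by rw [← hsq, div_self (pow_ne_zero 2 hrpos.ne')]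
          rw [this, Real.sqrt_one]
        exact this.le
      · push_neg at hS
        exact h2 i hT hS
    · exact (h3 i hT).le
  -- norm12 z ≤ norm12 c and norm12 c = ⟨d, z⟩
  have hzc : norm12 z ≤ norm12 c := hopt c hc
  have hkey : norm12 c ≤ ∑ i, rowNorm2 d i * rowNorm2 z i := by
    calc norm12 c = ∑ p, d p * c p := hdc.symm
      _ = lam ⬝ᵥ (M *ᵥ c) := dot c
      _ = lam ⬝ᵥ (M *ᵥ z) := by rw [hc, hz]
      _ = ∑ p, d p * z p := (dot z).symm
      _ ≤ _ := hcsz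
  -- ∑ (1 - α i) * r i ≤ 0 with nonneg terms ⇒ each term = 0
  have hsum0 : ∑ i, (1 - rowNorm2 d i) * rowNorm2 z i = 0 := by
    have hle : ∑ i, (1 - rowNorm2 d i) * rowNorm2 z i ≤ 0 := by
      have : ∑ i, rowNorm2 z i ≤ ∑ i, rowNorm2 d i * rowNorm2 z i :=
        le_trans (le_trans (le_of_eq rfl) hzc) hkey
      have h' : ∑ i, (1 - rowNorm2 d i) * rowNorm2 z i
          = (∑ i, rowNorm2 z i) - ∑ i, rowNorm2 d i * rowNorm2 z i := by
        rw [← Finset.sum_sub_distrib]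
        refine Finset.sum_congr rfl fun i _ => by ring
      rw [h']
      linarith
    have hge : 0 ≤ ∑ i, (1 - rowNorm2 d i) * rowNorm2 z i :=
      Finset.sum_nonneg fun i _ =>
        mul_nonneg (by linarith [halpha i]) (Real.sqrt_nonneg _)
    linarith
  intro i hiT g
  have hterm : (1 - rowNorm2 d i) * rowNorm2 z i = 0 := by
    have := (Finset.sum_eq_zero_iff_of_nonneg
      (fun j _ => mul_nonneg (by linarith [halpha j]) (Real.sqrt_nonneg _))).mp hsum0
    exact this i (Finset.mem_univ i)
  have hr0 : rowNorm2 z i = 0 := by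
    have hpos : 0 < 1 - rowNorm2 d i := by linarith [h3 i hiT]
    rcases mul_eq_zero.mp hterm with h | h
    · linarith
    · exact h
  have hs0 : ∑ g, (z (i, g)) ^ 2 = 0 := by
    have := Real.sqrt_eq_zero (Finset.sum_nonneg fun g _ => sq_nonneg _) |>.mp hr0
    exact this
  have := (Finset.sum_eq_zero_iff_of_nonneg (fun g _ => sq_nonneg (z (i, g)))).mp hs0
  have := this g (Finset.mem_univ g)
  exact pow_eq_zero_iff (by norm_num) |>.mp this
end

section
/- Let n, N_G be positive integers and L_1, …, L_{N_G} ∈ ℝ^{n×n} be fixed matrices. Suppose the data matrix X ∈ ℝ^{n×N} has columns partitioned into L groups, where every column X_j in group m satisfies X_j = Q_m a_j for a matrix Q_m ∈ ℝ^{n×d_m} with orthonormal columns whose column span is invariant under each L_g (i.e., L_g Q_m u lies in the column span of Q_m for all u and g). Fix a column index i belonging to group ℓ, and let T ⊆ {1,…,N}\{i} be the indices of the other columns in group ℓ. Let A^ℓ_{−i,G} = Q_ℓᵀ [L_1 X^ℓ_{−i}, …, L_{N_G} X^ℓ_{−i}], where X^ℓ_{−i} collects the columns indexed by T. Suppose there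 exist c̄ indexed by T×{1,…,N_G} with A^ℓ_{−i,G} c̄ = a_i, and λ ∈ ℝ^{d_ℓ} such that: (i) for every j ∈ T with nonzero j-th row of reshape(c̄), the j-th row of reshape((A^ℓ_{−i,G})ᵀ λ) equals c̄_{j}/‖c̄_{j}‖₂; (ii) for the remaining j ∈ T, the ℓ₂ norm of the j-th row of reshape((A^ℓ_{−i,G})ᵀ λ) is at most 1; and (iii) for every column X_j of every group k ≠ ℓ, ‖X_{j,G}ᵀ (Q_ℓ λ)‖₂ < 1, where X_{j,G} = [L_1 X_j, …, L_{N_G} X_j] ∈ ℝ^{n×N_G}. Then every optimal solution z of: minimize ‖reshape(z)‖_{1,2} subject to X_{−i,G} z = X_i, where X_{−i,G} = [L_1 X_{−i}, …, L_{N_G} X_{−i}], has the property that every row of reshape(z) indexed by a column outside group ℓ is zero. -/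
open Matrix


private lemma aux_sum {α : Type*} [Fintype α] {q p : α → Prop} [DecidablePred q] [DecidablePred p]
    (F : {x // q x} → ℝ) (hF : ∀ x : {x // q x}, ¬ p x.1 → F x = 0) :
    ∑ x : {x // q x}, F x = ∑ x : {x // q x ∧ p x}, F ⟨x.1, x.2.1⟩ := by
  classical
  let e : {x // q x ∧ p x} ↪ {x // q x} :=
    ⟨fun x => ⟨x.1, x.2.1⟩, fun a b hab => by simpa [Subtype.ext_iff] using hab⟩
  rw [show (∑ x : {x // q x ∧ p x}, F ⟨x.1, x.2.1⟩) = ∑ x ∈ Finset.univ.map e, F x from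
    (Finset.sum_map _ e F).symm]
  refine (Finset.sum_subset (Finset.subset_univ _) ?_).symm
  intro x _ hx
  refine hF x fun hp => hx ?_
  simp only [Finset.mem_map, Finset.mem_univ, true_and]
  exact ⟨⟨x.1, x.2, hp⟩, rfl⟩

private lemma aux_normdot {NG : ℕ} (c : Fin NG → ℝ) (h : ∃ g, c g ≠ 0) :
    ∑ g, c g / Real.sqrt (∑ g', (c g') ^ 2) * c g = Real.sqrt (∑ g', (c g') ^ 2) := by
  have hs : 0 < ∑ g', (c g') ^ 2 := by
    obtain ⟨g, hg⟩ := h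
    exact Finset.sum_pos' (fun _ _ => sq_nonneg _) ⟨g, Finset.mem_univ g, by positivity⟩
  have : ∑ g, c g / Real.sqrt (∑ g', (c g') ^ 2) * c g
      = (∑ g, (c g) ^ 2) / Real.sqrt (∑ g', (c g') ^ 2) := by
    rw [Finset.sum_div]; exact Finset.sum_congr rfl fun g _ => by ring
  rw [this, Real.div_sqrt]

/-- Submodule identification for SSmC. The data columns of `X` are partitioned into `L` groups
(via `grp`); columns in group `m` lie in the span of `Q m`, whose columns are orthonormal and
whose span is invariant under each group action matrix `Lg g`. If for the column `i` (of group
`grp i`) there is a solution `c̄` of the reduced system over the set `T` of other columns of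
group `grp i`, together with a dual certificate `λ` satisfying conditions (i)–(iii), then every
optimal solution `z` of `min ‖reshape z‖_{1,2} s.t. X_{-i,G} z = X_i` has zero rows at every
column belonging to a group other than `grp i`. -/
theorem stmt3 {n NG N L : ℕ} (hn : 0 < n) (hNG : 0 < NG) (hL : 0 < L)
    (Lg : Fin NG → Matrix (Fin n) (Fin n) ℝ)
    (grp : Fin N → Fin L) (d : Fin L → ℕ)
    (Q : (m : Fin L) → Matrix (Fin n) (Fin (d m)) ℝ)
    -- orthonormal columns
    (hQ : ∀ m, (Q m)ᵀ * Q m = 1)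
    -- the column span of each `Q m` is invariant under each `Lg g`
    (hinv : ∀ (m : Fin L) (g : Fin NG) (u : Fin (d m) → ℝ),
      ∃ w : Fin (d m) → ℝ, Q m *ᵥ w = Lg g *ᵥ (Q m *ᵥ u))
    (X : Matrix (Fin n) (Fin N) ℝ)
    (a : (j : Fin N) → Fin (d (grp j)) → ℝ)
    (hX : ∀ j, (fun r => X r j) = Q (grp j) *ᵥ a j)
    (i : Fin N)
    -- `c̄`, indexed by `T × {1,…,N_G}` with `T` the other columns of group `grp i`,
    -- solves the reduced system `A^ℓ_{-i,G} c̄ = a_i`,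
    -- where the `(j,g)` column of `A^ℓ_{-i,G}` is `(Q ℓ)ᵀ (Lg g) X_j`
    (cbar : {j : Fin N // j ≠ i ∧ grp j = grp i} × Fin NG → ℝ)
    (hcbar : (fun r => ∑ jg : {j : Fin N // j ≠ i ∧ grp j = grp i} × Fin NG,
        ((Q (grp i))ᵀ *ᵥ (Lg jg.2 *ᵥ fun s => X s jg.1.1)) r * cbar jg) = a i)
    (lam : Fin (d (grp i)) → ℝ)
    -- (i) on the row-support of `c̄`, the rows of `reshape ((A^ℓ_{-i,G})ᵀ λ)` are the
    -- normalized rows of `reshape c̄`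
    (h1 : ∀ j : {j : Fin N // j ≠ i ∧ grp j = grp i}, (∃ g, cbar (j, g) ≠ 0) →
      ∀ g, ((Q (grp i))ᵀ *ᵥ (Lg g *ᵥ fun s => X s j.1)) ⬝ᵥ lam =
        cbar (j, g) / Real.sqrt (∑ g', (cbar (j, g')) ^ 2))
    -- (ii) on the remaining rows of `T`, the rows of `reshape ((A^ℓ_{-i,G})ᵀ λ)` have
    -- ℓ₂ norm at most 1
    (h2 : ∀ j : {j : Fin N // j ≠ i ∧ grp j = grp i}, (∀ g, cbar (j, g) = 0) →
      Real.sqrt (∑ g, (((Q (grp i))ᵀ *ᵥ (Lg g *ᵥ fun s => X s j.1)) ⬝ᵥ lam) ^ 2) ≤ 1)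
    -- (iii) for every column of every other group, `‖X_{j,G}ᵀ (Q ℓ λ)‖₂ < 1`
    (h3 : ∀ j : Fin N, grp j ≠ grp i →
      Real.sqrt (∑ g, ((Lg g *ᵥ fun s => X s j) ⬝ᵥ (Q (grp i) *ᵥ lam)) ^ 2) < 1)
    -- `z` is an optimal solution of `min ‖reshape ·‖_{1,2}` s.t. `X_{-i,G} z = X_i`
    (z : {j : Fin N // j ≠ i} × Fin NG → ℝ)
    (hz : (fun r => ∑ jg : {j : Fin N // j ≠ i} × Fin NG,
        (Lg jg.2 *ᵥ fun s => X s jg.1.1) r * z jg) = fun r => X r i)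
    (hopt : ∀ w : {j : Fin N // j ≠ i} × Fin NG → ℝ,
      (fun r => ∑ jg : {j : Fin N // j ≠ i} × Fin NG,
        (Lg jg.2 *ᵥ fun s => X s jg.1.1) r * w jg) = (fun r => X r i) →
      ∑ j : {j : Fin N // j ≠ i}, Real.sqrt (∑ g, (z (j, g)) ^ 2) ≤
        ∑ j : {j : Fin N // j ≠ i}, Real.sqrt (∑ g, (w (j, g)) ^ 2)) :
    ∀ j : {j : Fin N // j ≠ i}, grp j.1 ≠ grp i → ∀ g, z (j, g) = 0 := by

  classical
  have horth : ∀ u : Fin (d (grp i)) → ℝ, (Q (grp i))ᵀ *ᵥ (Q (grp i) *ᵥ u) = u := fun u => by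
    rw [Matrix.mulVec_mulVec, hQ, Matrix.one_mulVec]
  have hspan : ∀ j : Fin N, grp j = grp i → ∃ u, (fun r => X r j) = Q (grp i) *ᵥ u := by
    intro j hj
    obtain ⟨u, hu⟩ : ∃ u, Q (grp i) *ᵥ u = Q (grp j) *ᵥ a j := by
      rw [← hj]; exact ⟨a j, rfl⟩
    exact ⟨u, by rw [hX j, ← hu]⟩
  have hinv' : ∀ (g : Fin NG) (j : Fin N), grp j = grp i →
      Q (grp i) *ᵥ ((Q (grp i))ᵀ *ᵥ (Lg g *ᵥ fun s => X s j)) = Lg g *ᵥ fun s => X s j := by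
    intro g j hj
    obtain ⟨u, hu⟩ := hspan j hj
    obtain ⟨w, hw⟩ := hinv (grp i) g u
    rw [hu, ← hw, horth]
  have hdot : ∀ (g : Fin NG) (j : Fin N), grp j = grp i →
      (Lg g *ᵥ fun s => X s j) ⬝ᵥ (Q (grp i) *ᵥ lam)
        = ((Q (grp i))ᵀ *ᵥ (Lg g *ᵥ fun s => X s j)) ⬝ᵥ lam := by
    intro g j hj
    conv_lhs => rw [← hinv' g j hj]
    rw [Matrix.dotProduct_mulVec, ← Matrix.mulVec_transpose, horth]
  -- swap lemmas
  have hswap : ∀ {ι κ : Type} [Fintype ι] [Fintype κ] (B : ι → κ → ℝ) (c : ι → ℝ) (v : κ → ℝ),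
      (fun r => ∑ p, B p r * c p) ⬝ᵥ v = ∑ p, (B p ⬝ᵥ v) * c p := by
    intro ι κ _ _ B c v
    simp only [dotProduct, Finset.sum_mul]
    rw [Finset.sum_comm]
    exact Finset.sum_congr rfl fun p _ => Finset.sum_congr rfl fun r _ => by ring
  have hswap2 : ∀ {ι : Type} [Fintype ι] (A : ι → Fin (d (grp i)) → ℝ) (c : ι → ℝ)
      (r : Fin n), (Q (grp i) *ᵥ fun s => ∑ p, A p s * c p) r = ∑ p, (Q (grp i) *ᵥ A p) r * c p := by
    intro ι _ A c r
    simp only [Matrix.mulVec, dotProduct, Finset.mul_sum, Finset.sum_mul]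
    rw [Finset.sum_comm]
    exact Finset.sum_congr rfl fun p _ => Finset.sum_congr rfl fun s _ => by ring
  -- value of the certificate
  have hval : (fun r => X r i) ⬝ᵥ (Q (grp i) *ᵥ lam)
      = ∑ j : {j : Fin N // j ≠ i ∧ grp j = grp i},
          Real.sqrt (∑ g, (cbar (j, g)) ^ 2) := by
    rw [hX i, Matrix.dotProduct_mulVec, ← Matrix.mulVec_transpose, horth, ← hcbar, hswap,
      Fintype.sum_prod_type]
    refine Finset.sum_congr rfl fun j _ => ?_
    by_cases hc : ∃ g, cbar (j, g) ≠ 0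
    · simp only [h1 j hc]
      exact aux_normdot (fun g => cbar (j, g)) hc
    · push_neg at hc
      simp [hc]
  have hval2 : (fun r => X r i) ⬝ᵥ (Q (grp i) *ᵥ lam)
      = ∑ j : {j : Fin N // j ≠ i}, ∑ g,
          ((Lg g *ᵥ fun s => X s j.1) ⬝ᵥ (Q (grp i) *ᵥ lam)) * z (j, g) := by
    rw [← hz, hswap, Fintype.sum_prod_type]
  -- norms
  set zn : {j : Fin N // j ≠ i} → ℝ := fun j => Real.sqrt (∑ g, (z (j, g)) ^ 2) with hzn
  set vn : {j : Fin N // j ≠ i} → ℝ := fun j =>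
    Real.sqrt (∑ g, ((Lg g *ᵥ fun s => X s j.1) ⬝ᵥ (Q (grp i) *ᵥ lam)) ^ 2) with hvn
  have hzn0 : ∀ j, 0 ≤ zn j := fun j => Real.sqrt_nonneg _
  have hCS : ∀ j : {j : Fin N // j ≠ i},
      ∑ g, ((Lg g *ᵥ fun s => X s j.1) ⬝ᵥ (Q (grp i) *ᵥ lam)) * z (j, g) ≤ vn j * zn j :=
    fun j => Real.sum_mul_le_sqrt_mul_sqrt _ _ _
  have hv_le : ∀ j : {j : Fin N // j ≠ i}, grp j.1 = grp i → vn j ≤ 1 := by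
    intro j hj
    have hrw : ∀ g, (Lg g *ᵥ fun s => X s j.1) ⬝ᵥ (Q (grp i) *ᵥ lam)
        = ((Q (grp i))ᵀ *ᵥ (Lg g *ᵥ fun s => X s j.1)) ⬝ᵥ lam := fun g => hdot g j.1 hj
    have hj' : (⟨j.1, j.2, hj⟩ : {j : Fin N // j ≠ i ∧ grp j = grp i}) = ⟨j.1, j.2, hj⟩ := rfl
    rw [hvn]
    simp only [hrw]
    by_cases hc : ∃ g, cbar (⟨j.1, j.2, hj⟩, g) ≠ 0
    · have hs : 0 < ∑ g', (cbar (⟨j.1, j.2, hj⟩, g')) ^ 2 := by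
        obtain ⟨g, hg⟩ := hc
        exact Finset.sum_pos' (fun _ _ => sq_nonneg _) ⟨g, Finset.mem_univ g, by positivity⟩
      simp only [h1 ⟨j.1, j.2, hj⟩ hc]
      have : ∑ g, (cbar (⟨j.1, j.2, hj⟩, g) / Real.sqrt (∑ g', (cbar (⟨j.1, j.2, hj⟩, g')) ^ 2)) ^ 2 = 1 := by
        simp_rw [div_pow, Real.sq_sqrt hs.le, ← Finset.sum_div]
        exact div_self hs.ne'
      rw [this, Real.sqrt_one]
    · push_neg at hc
      exact h2 ⟨j.1, j.2, hj⟩ hc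
  -- feasibility of extended certificate
  set cext : {j : Fin N // j ≠ i} × Fin NG → ℝ :=
    fun p => if h : grp p.1.1 = grp i then cbar (⟨p.1.1, p.1.2, h⟩, p.2) else 0 with hcext
  have hfeas : (fun r => ∑ jg : {j : Fin N // j ≠ i} × Fin NG,
      (Lg jg.2 *ᵥ fun s => X s jg.1.1) r * cext jg) = fun r => X r i := by
    funext r
    have hred : ∑ jg : {j : Fin N // j ≠ i} × Fin NG,
          (Lg jg.2 *ᵥ fun s => X s jg.1.1) r * cext jg
        = ∑ jg : {j : Fin N // j ≠ i ∧ grp j = grp i} × Fin NG,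
            (Lg jg.2 *ᵥ fun s => X s jg.1.1) r * cbar jg := by
      rw [Fintype.sum_prod_type, Fintype.sum_prod_type,
        aux_sum (p := fun j : Fin N => grp j = grp i)
          (F := fun j : {j : Fin N // j ≠ i} =>
            ∑ g, (Lg g *ᵥ fun s => X s j.1) r * cext (j, g))
          (fun j hj => by
            refine Finset.sum_eq_zero fun g _ => ?_
            simp only [hcext, dif_neg hj, mul_zero])]
      refine Finset.sum_congr rfl fun j _ => Finset.sum_congr rfl fun g _ => ?_
      simp only [hcext]
      rw [dif_pos j.2.2]
    rw [hred, congrFun (hX i) r, ← hcbar, hswap2]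
    refine Finset.sum_congr rfl fun jg _ => ?_
    rw [congrFun (hinv' jg.2 jg.1.1 jg.1.2.2) r]
  have hcost : ∑ j : {j : Fin N // j ≠ i}, Real.sqrt (∑ g, (cext (j, g)) ^ 2)
      = ∑ j : {j : Fin N // j ≠ i ∧ grp j = grp i}, Real.sqrt (∑ g, (cbar (j, g)) ^ 2) := by
    rw [aux_sum (p := fun j : Fin N => grp j = grp i)
      (F := fun j : {j : Fin N // j ≠ i} => Real.sqrt (∑ g, (cext (j, g)) ^ 2))
      (fun j hj => by simp [hcext, dif_neg hj])]
    refine Finset.sum_congr rfl fun j _ => ?_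
    congr 1
    refine Finset.sum_congr rfl fun g _ => ?_
    simp only [hcext]
    rw [dif_pos j.2.2]
  -- main inequality chain
  have hmain : ∑ j : {j : Fin N // j ≠ i}, zn j ≤ ∑ j : {j : Fin N // j ≠ i}, vn j * zn j := by
    calc ∑ j : {j : Fin N // j ≠ i}, zn j
        ≤ ∑ j : {j : Fin N // j ≠ i}, Real.sqrt (∑ g, (cext (j, g)) ^ 2) := hopt cext hfeas
      _ = (fun r => X r i) ⬝ᵥ (Q (grp i) *ᵥ lam) := by rw [hcost, hval]
      _ = ∑ j : {j : Fin N // j ≠ i}, ∑ g,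
            ((Lg g *ᵥ fun s => X s j.1) ⬝ᵥ (Q (grp i) *ᵥ lam)) * z (j, g) := hval2
      _ ≤ ∑ j : {j : Fin N // j ≠ i}, vn j * zn j := Finset.sum_le_sum fun j _ => hCS j
  -- split over groups
  set S : Finset {j : Fin N // j ≠ i} := Finset.univ.filter (fun j => grp j.1 = grp i) with hS
  have hsplit1 := Finset.sum_filter_add_sum_filter_not Finset.univ
    (fun j : {j : Fin N // j ≠ i} => grp j.1 = grp i) zn
  have hsplit2 := Finset.sum_filter_add_sum_filter_not Finset.univ
    (fun j : {j : Fin N // j ≠ i} => grp j.1 = grp i) (fun j => vn j * zn j)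
  have hSle : ∑ j ∈ S, vn j * zn j ≤ ∑ j ∈ S, zn j := by
    refine Finset.sum_le_sum fun j hj => ?_
    have hjg : grp j.1 = grp i := (Finset.mem_filter.mp hj).2
    exact mul_le_of_le_one_left (hzn0 j) (hv_le j hjg)
  have hkey : ∑ j ∈ Finset.univ.filter (fun j : {j : Fin N // j ≠ i} => ¬ grp j.1 = grp i),
      (zn j - vn j * zn j) ≤ 0 := by
    rw [Finset.sum_sub_distrib]
    have := hmain
    rw [← hsplit1, ← hsplit2] at this
    have := hSle
    linarith
  have hterm : ∀ j ∈ Finset.univ.filter (fun j : {j : Fin N // j ≠ i} => ¬ grp j.1 = grp i),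
      0 ≤ zn j - vn j * zn j := by
    intro j hj
    have hjg : grp j.1 ≠ grp i := (Finset.mem_filter.mp hj).2
    have hv : vn j < 1 := h3 j.1 hjg
    nlinarith [hzn0 j]
  have hzero : ∀ j ∈ Finset.univ.filter (fun j : {j : Fin N // j ≠ i} => ¬ grp j.1 = grp i),
      zn j - vn j * zn j = 0 := by
    intro j hj
    have hle := Finset.sum_nonneg hterm
    have := (Finset.sum_eq_zero_iff_of_nonneg hterm).mp (le_antisymm hkey hle)
    exact this j hj
  intro j hj g
  have hjmem : j ∈ Finset.univ.filter (fun j : {j : Fin N // j ≠ i} => ¬ grp j.1 = grp i) :=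
    Finset.mem_filter.mpr ⟨Finset.mem_univ j, hj⟩
  have h0 := hzero j hjmem
  have hv : vn j < 1 := h3 j.1 hj
  have hzj : zn j = 0 := by nlinarith [hzn0 j]
  have hsum : ∑ g, (z (j, g)) ^ 2 = 0 := by
    have := Real.sqrt_eq_zero (Finset.sum_nonneg fun g _ => sq_nonneg _) |>.mp hzj
    exact this
  have := (Finset.sum_eq_zero_iff_of_nonneg (fun g _ => sq_nonneg (z (j, g)))).mp hsum
  exact pow_eq_zero_iff (by norm_num) |>.mp (this g (Finset.mem_univ g))
end

section
/- Let A be a real d × (N·N_G) matrix with columns indexed by pairs (i,g) ∈ {1,…,N}×{1,…,N_G}, and let P = { λ ∈ ℝ^d : ‖reshape(Aᵀλ)‖_{∞,2} ≤ 1 }. Then the polar set of P with respect to the standard inner product, P° = { z ∈ ℝ^d : ⟨z, λ⟩ ≤ 1 for all λ ∈ P }, equals { A b : b ∈ ℝ^{N·N_G}, ‖reshape(b)‖_{1,2} ≤ 1 }, the image under A of the unit ball of the group-sparse (1,2)-norm. -/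
open Matrix
open scoped RealInnerProductSpace

/-- The `i`-th row as a Euclidean vector. -/
noncomputable def rowVec {N NG : ℕ} (c : Fin N × Fin NG → ℝ) (i : Fin N) :
    EuclideanSpace ℝ (Fin NG) := WithLp.toLp 2 (fun g => c (i, g))

lemma rowNorm2_eq {N NG : ℕ} (c : Fin N × Fin NG → ℝ) (i : Fin N) :
    rowNorm2 c i = ‖rowVec c i‖ := by
  rw [EuclideanSpace.norm_eq]
  simp [rowNorm2, rowVec, Real.norm_eq_abs, sq_abs]

lemma rowNorm2_nonneg {N NG : ℕ} (c : Fin N × Fin NG → ℝ) (i : Fin N) :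
    0 ≤ rowNorm2 c i := Real.sqrt_nonneg _

lemma norm12_nonneg {N NG : ℕ} (c : Fin N × Fin NG → ℝ) : 0 ≤ norm12 c :=
  Finset.sum_nonneg fun i _ => rowNorm2_nonneg c i

lemma inner_row {N NG : ℕ} (c b : Fin N × Fin NG → ℝ) (i : Fin N) :
    (inner ℝ (rowVec c i) (rowVec b i) : ℝ) = ∑ g, c (i, g) * b (i, g) := by
  simp [rowVec, PiLp.inner_apply, mul_comm]

lemma dot_split {N NG : ℕ} (c b : Fin N × Fin NG → ℝ) :
    c ⬝ᵥ b = ∑ i, ∑ g, c (i, g) * b (i, g) := by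
  simp [dotProduct, Fintype.sum_prod_type]

lemma dot_le {N NG : ℕ} (c b : Fin N × Fin NG → ℝ) (M : ℝ)
    (hM : ∀ i, rowNorm2 c i ≤ M) : c ⬝ᵥ b ≤ M * norm12 b := by
  rw [dot_split, norm12, Finset.mul_sum]
  refine Finset.sum_le_sum fun i _ => ?_
  calc ∑ g, c (i, g) * b (i, g) = (inner ℝ (rowVec c i) (rowVec b i) : ℝ) := (inner_row c b i).symm
    _ ≤ ‖rowVec c i‖ * ‖rowVec b i‖ := real_inner_le_norm _ _
    _ ≤ M * rowNorm2 b i := by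
        rw [← rowNorm2_eq, ← rowNorm2_eq]
        exact mul_le_mul_of_nonneg_right (hM i) (rowNorm2_nonneg b i)

/-- The polar of `P = {λ | ‖reshape (Aᵀ λ)‖_{∞,2} ≤ 1}` is the image under `A` of the unit
ball of the group-sparse `(1,2)`-norm. Here `‖reshape (Aᵀ λ)‖_{∞,2} ≤ 1` is expressed as:
every row of `reshape (Aᵀ λ)` has ℓ₂ norm at most `1`. -/
theorem stmt6 {d N NG : ℕ}
    (A : Matrix (Fin d) (Fin N × Fin NG) ℝ) :
    {z : Fin d → ℝ | ∀ lam : Fin d → ℝ,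
        (∀ i, rowNorm2 (Aᵀ *ᵥ lam) i ≤ 1) → z ⬝ᵥ lam ≤ 1} =
      {z : Fin d → ℝ | ∃ b : Fin N × Fin NG → ℝ, norm12 b ≤ 1 ∧ A *ᵥ b = z} := by
  ext z
  simp only [Set.mem_setOf_eq]
  constructor
  · intro hz
    -- Hard direction: separation.
    by_contra hns
    -- The set S
    set K : Set (Fin N × Fin NG → ℝ) := {b | norm12 b ≤ 1} with hK
    set S : Set (Fin d → ℝ) := (fun b => A *ᵥ b) '' K with hS
    have hzS : z ∉ S := by
      intro ⟨b, hb, hab⟩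
      exact hns ⟨b, hb, hab⟩
    -- K is convex
    have hKconv : Convex ℝ K := by
      intro x hx y hy a b ha hb hab
      have keyi : ∀ i, rowNorm2 (a • x + b • y) i ≤ a * rowNorm2 x i + b * rowNorm2 y i := by
        intro i
        have h1 : rowVec (a • x + b • y) i = a • rowVec x i + b • rowVec y i := by
          ext g; simp [rowVec]
        rw [rowNorm2_eq, rowNorm2_eq, rowNorm2_eq, h1]
        calc ‖a • rowVec x i + b • rowVec y i‖
            ≤ ‖a • rowVec x i‖ + ‖b • rowVec y i‖ := norm_add_le _ _
          _ = a * ‖rowVec x i‖ + b * ‖rowVec y i‖ := by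
              rw [norm_smul, norm_smul, Real.norm_eq_abs, Real.norm_eq_abs,
                abs_of_nonneg ha, abs_of_nonneg hb]
      have key : norm12 (a • x + b • y) ≤ a * norm12 x + b * norm12 y := by
        calc norm12 (a • x + b • y) ≤ ∑ i, (a * rowNorm2 x i + b * rowNorm2 y i) :=
              Finset.sum_le_sum fun i _ => keyi i
          _ = a * norm12 x + b * norm12 y := by
              rw [Finset.sum_add_distrib, norm12, norm12, Finset.mul_sum, Finset.mul_sum]
      calc norm12 (a • x + b • y) ≤ a * norm12 x + b * norm12 y := key
        _ ≤ a * 1 + b * 1 := by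
            exact add_le_add (mul_le_mul_of_nonneg_left hx ha)
              (mul_le_mul_of_nonneg_left hy hb)
        _ = 1 := by rw [mul_one, mul_one, hab]
    -- K is compact
    have hKcomp : IsCompact K := by
      have hsub : K ⊆ Set.pi Set.univ (fun _ : Fin N × Fin NG => Set.Icc (-1:ℝ) 1) := by
        intro b hb p hp
        have h1 : |b p| ≤ rowNorm2 b p.1 := by
          rw [rowNorm2]
          have : |b p| = Real.sqrt ((b p)^2) := (Real.sqrt_sq_eq_abs _).symm
          rw [this]
          apply Real.sqrt_le_sqrt
          exact Finset.single_le_sum (f := fun g => (b (p.1, g))^2)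
            (fun g _ => sq_nonneg _) (Finset.mem_univ p.2)
        have h2 : rowNorm2 b p.1 ≤ norm12 b :=
          Finset.single_le_sum (fun i _ => rowNorm2_nonneg b i) (Finset.mem_univ p.1)
        have : |b p| ≤ 1 := le_trans h1 (le_trans h2 hb)
        exact abs_le.mp this
      have hclosed : IsClosed K := by
        have hcont : Continuous fun b : Fin N × Fin NG → ℝ => norm12 b := by
          unfold norm12 rowNorm2
          fun_prop
        exact isClosed_le hcont continuous_const
      exact (isCompact_univ_pi (fun _ => isCompact_Icc)).of_isClosed_subset hclosed hsub
    have hScomp : IsCompact S := by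
      apply hKcomp.image
      exact (Matrix.mulVecLin A).continuous_of_finiteDimensional
    have hSconv : Convex ℝ S := by
      apply Convex.is_linear_image hKconv
      exact (Matrix.mulVecLin A).isLinear
    obtain ⟨f, u, hfS, hfz⟩ :=
      geometric_hahn_banach_closed_point hSconv hScomp.isClosed hzS
    -- represent f as dot product with lam
    set lam : Fin d → ℝ := fun j => f (Pi.single j (1:ℝ)) with hlam
    have hf_eq : ∀ w : Fin d → ℝ, f w = w ⬝ᵥ lam := by
      intro w
      have hw : w = ∑ j, Pi.single j (w j) := (Finset.univ_sum_single w).symm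
      conv_lhs => rw [hw]
      rw [map_sum]
      rw [dotProduct]
      refine Finset.sum_congr rfl fun j _ => ?_
      have : Pi.single j (w j) = w j • (Pi.single j (1:ℝ) : Fin d → ℝ) := by
        funext k
        by_cases hk : k = j
        · subst hk; simp
        · simp [Pi.single_apply, hk]
      rw [this, f.map_smul]
      simp [hlam]
    -- 0 < u
    have h0S : (0 : Fin d → ℝ) ∈ S := by
      refine ⟨0, ?_, ?_⟩
      · simp [hK, norm12, rowNorm2]
      · simp
    have hu_pos : 0 < u := by
      have := hfS 0 h0S
      simpa using this
    -- each row norm of Aᵀ lam is < u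
    have hrow : ∀ i, rowNorm2 (Aᵀ *ᵥ lam) i < u := by
      intro i
      set c := Aᵀ *ᵥ lam with hc
      rcases eq_or_lt_of_le (rowNorm2_nonneg c i) with h0 | hpos
      · rw [← h0]; exact hu_pos
      · set r := rowNorm2 c i with hr
        set b : Fin N × Fin NG → ℝ := fun p => if p.1 = i then c (i, p.2) / r else 0 with hb
        have hrowb : ∀ j, rowNorm2 b j = if j = i then 1 else 0 := by
          intro j
          by_cases hj : j = i
          · subst hj
            rw [rowNorm2]
            have heach : ∀ g, (b (j, g))^2 = (c (j, g))^2 / r^2 := by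
              intro g
              show ((if (j, g).1 = j then c (j, (j, g).2) / r else 0)^2) = _
              rw [if_pos rfl, div_pow]
            have hsq : (∑ g, (c (j, g))^2) = r^2 := by
              rw [hr, rowNorm2, Real.sq_sqrt]
              exact Finset.sum_nonneg fun g _ => sq_nonneg _
            rw [Finset.sum_congr rfl (fun g _ => heach g), ← Finset.sum_div, hsq,
              div_self (pow_ne_zero 2 (ne_of_gt hpos)), Real.sqrt_one, if_pos rfl]
          · rw [rowNorm2]
            have : ∀ g, (b (j, g))^2 = 0 := by
              intro g; simp [hb, hj]
            rw [Finset.sum_congr rfl (fun g _ => this g)]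
            simp [hj]
        have hbK : b ∈ K := by
          rw [hK, Set.mem_setOf_eq, norm12]
          rw [Finset.sum_congr rfl (fun j _ => hrowb j)]
          simp
        have hdot : lam ⬝ᵥ (A *ᵥ b) = r := by
          rw [Matrix.dotProduct_mulVec, ← Matrix.mulVec_transpose, ← hc, dot_split]
          have hrow_sum : ∀ j, (∑ g, c (j, g) * b (j, g)) = if j = i then r else 0 := by
            intro j
            by_cases hj : j = i
            · subst hj
              have heach : ∀ g, c (j, g) * b (j, g) = (c (j, g))^2 / r := by
                intro g
                show c (j, g) * (if ((j, g) : Fin N × Fin NG).1 = j then c (j, ((j, g) : Fin N × Fin NG).2) / r else 0) = _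
                rw [if_pos rfl]; ring
              rw [if_pos rfl, Finset.sum_congr rfl (fun g _ => heach g), ← Finset.sum_div]
              have hsq : (∑ g, (c (j, g))^2) = r^2 := by
                rw [hr, rowNorm2, Real.sq_sqrt]
                exact Finset.sum_nonneg fun g _ => sq_nonneg _
              rw [hsq, sq]
              field_simp
            · simp [hb, hj]
          rw [Finset.sum_congr rfl (fun j _ => hrow_sum j)]
          simp
        have := hfS (A *ᵥ b) ⟨b, hbK, rfl⟩
        rw [hf_eq, dotProduct_comm] at this
        rwa [hdot] at this
    -- scale lam
    have hmem : ∀ i, rowNorm2 (Aᵀ *ᵥ (u⁻¹ • lam)) i ≤ 1 := by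
      intro i
      have hsmul : Aᵀ *ᵥ (u⁻¹ • lam) = u⁻¹ • (Aᵀ *ᵥ lam) := by
        rw [Matrix.mulVec_smul]
      rw [hsmul]
      have hrw : rowNorm2 (u⁻¹ • (Aᵀ *ᵥ lam)) i = u⁻¹ * rowNorm2 (Aᵀ *ᵥ lam) i := by
        rw [rowNorm2_eq, rowNorm2_eq]
        have : rowVec (u⁻¹ • (Aᵀ *ᵥ lam)) i = u⁻¹ • rowVec (Aᵀ *ᵥ lam) i := by
          ext g; simp [rowVec]
        rw [this, norm_smul, Real.norm_eq_abs, abs_of_nonneg (le_of_lt (inv_pos.mpr hu_pos))]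
      rw [hrw]
      rw [inv_mul_le_iff₀ hu_pos, mul_one]
      exact le_of_lt (hrow i)
    have hle := hz (u⁻¹ • lam) hmem
    have : z ⬝ᵥ (u⁻¹ • lam) = u⁻¹ * (z ⬝ᵥ lam) := by
      rw [dotProduct_smul, smul_eq_mul]
    rw [this, inv_mul_le_iff₀ hu_pos, mul_one] at hle
    have hfz' : u < z ⬝ᵥ lam := by rwa [hf_eq] at hfz
    linarith
  · rintro ⟨b, hb, rfl⟩ lam hlam
    rw [dotProduct_comm, Matrix.dotProduct_mulVec, ← Matrix.mulVec_transpose]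
    calc (Aᵀ *ᵥ lam) ⬝ᵥ b ≤ 1 * norm12 b := dot_le _ _ 1 hlam
      _ ≤ 1 := by rw [one_mul]; exact hb
end

section
/- Let Q ∈ ℝ^{n×d} have orthonormal columns whose column span is invariant under each of L_1, …, L_{N_G} ∈ ℝ^{n×n} (i.e., L_g Q u lies in the column span of Q for every u ∈ ℝ^d and every g). Let X_1, …, X_m ∈ ℝⁿ be columns lying in the column span of Q, with X_j = Q a_j, and let X_i = Q a_i also lie in this span. Set A_G = Qᵀ [L_1 X, …, L_{N_G} X] ∈ ℝ^{d × m·N_G} and X_G = [L_1 X, …, L_{N_G} X] ∈ ℝ^{n × m·N_G}, where X = [X_1, …, X_m]. Then for every c̄ ∈ ℝ^{m·N_G}, A_G c̄ = a_i implies X_G c̄ = X_i. Consequently, any solution of the reduced linear system in the coordinates of the submodule, when zero-padded over the remaining data points, is feasible for the full self-representation constraint with the same group-sparse norm ‖reshape(·)‖_{1,2}. -/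
open Matrix

/-- If the column span of `Q` (orthonormal columns) is invariant under each `L g`, and all the
data points `X j = Q (a j)` as well as `X i = Q aᵢ` lie in this span, then any solution `c̄` of
the reduced system `A_G c̄ = aᵢ` (in the coordinates of the submodule) solves the full
self-representation system `X_G c̄ = Xᵢ`. Here `A_G = Qᵀ [L₁ X, …, L_{N_G} X]` and
`X_G = [L₁ X, …, L_{N_G} X]`. -/
theorem stmt10 {n d m NG : ℕ}
    (Q : Matrix (Fin n) (Fin d) ℝ) (hQ : Qᵀ * Q = 1)
    (L : Fin NG → Matrix (Fin n) (Fin n) ℝ)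
    (hinv : ∀ (g : Fin NG) (u : Fin d → ℝ), ∃ w : Fin d → ℝ, Q *ᵥ w = L g *ᵥ (Q *ᵥ u))
    (a : Fin m → Fin d → ℝ) (ai : Fin d → ℝ)
    (AG : Matrix (Fin d) (Fin m × Fin NG) ℝ)
    (hAG : ∀ r jg, AG r jg = (Qᵀ *ᵥ (L jg.2 *ᵥ (Q *ᵥ a jg.1))) r)
    (XG : Matrix (Fin n) (Fin m × Fin NG) ℝ)
    (hXG : ∀ r jg, XG r jg = (L jg.2 *ᵥ (Q *ᵥ a jg.1)) r)
    (cbar : Fin m × Fin NG → ℝ) (hc : AG *ᵥ cbar = ai) :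
    XG *ᵥ cbar = Q *ᵥ ai := by
  have hXQA : XG = Q * AG := by
    ext r jg
    obtain ⟨w, hw⟩ := hinv jg.2 (a jg.1)
    have hAGcol : ∀ r', AG r' jg = w r' := by
      intro r'
      rw [hAG, ← hw, mulVec_mulVec, hQ, one_mulVec]
    have : (Q * AG) r jg = (Q *ᵥ w) r := by
      simp only [mul_apply, mulVec, dotProduct]
      exact Finset.sum_congr rfl fun k _ => by rw [hAGcol k]
    rw [this, hw, hXG]
  rw [hXQA, ← mulVec_mulVec, hc]
end
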